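/- arXiv:1203.5677 — 2 statements merged into one kernel-verified Lean document; each statement's English description precedes it below -/
import Mathlib

section
/- Let ε : Fin K → ℤ, m : Fin K → Fin n → ℤ satisfy ∑_a ε(a) m_i^{(a)} m_j^{(a)} m_k^{(a)} = 0 for all i,j,k and ∑_a ε(a) m_i^{(a)} m_j^{(a)} = 0 for all i,j. Then for any i and any j, the certificate h_i(x,q;p) = ∏_a ∏_{l=0}^{m_i^{(a)}-1} θ(q^l ∏_k x_k^{m_k^{(a)}}; p)^{ε(a)} is invariant under x_j ↦ p x_j, i.e., h_i(x₁,...,p x_j,...,xₙ, q; p) = h_i(x, q; p). -/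
set_option maxHeartbeats 1000000


open Complex Finset

/-- The theta function `θ(z;p) = (z;p)_∞ (p z⁻¹;p)_∞`. -/
noncomputable def theta (p z : ℂ) : ℂ :=
  (∏' k : ℕ, (1 - z * p ^ k)) * (∏' k : ℕ, (1 - p ^ (k + 1) * z⁻¹))

open Filter Topology in
lemma multipliable_theta_aux (p z : ℂ) (hp : ‖p‖ < 1) :
    Multipliable (fun k : ℕ => 1 - z * p ^ k) := by
  have hgeo : Summable (fun k : ℕ => z * p ^ k) :=
    (summable_geometric_of_norm_lt_one (by simpa using hp)).mul_left z
  obtain ⟨N, hN⟩ := Metric.tendsto_atTop.mp hgeo.tendsto_atTop_zero 1 one_pos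
  have habs : ∀ n : ℕ, ‖z * p ^ (n + N)‖ < 1 := by
    intro n
    have := hN (n + N) (Nat.le_add_left N n)
    simpa [Complex.dist_eq] using this
  have hne : ∀ n : ℕ, 1 - z * p ^ (n + N) ≠ 0 := by
    intro n h
    have h1 : (1 : ℂ) = z * p ^ (n + N) := sub_eq_zero.mp h
    have h2 := habs n
    rw [← h1] at h2
    simp at h2
  have hsum : Summable (fun n : ℕ => z * p ^ (n + N)) := (summable_nat_add_iff N).mpr hgeo
  have hm : Multipliable (fun n : ℕ => 1 - z * p ^ (n + N)) :=
    (Complex.multipliable_one_add_of_summable hsum.neg).congr fun n => by ring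
  exact hm.comp_nat_add

lemma tprod_split (p z : ℂ) (hp : ‖p‖ < 1) :
    (∏' k : ℕ, (1 - z * p ^ k)) = (1 - z) * ∏' k : ℕ, (1 - z * p ^ (k + 1)) := by
  have hm : Multipliable (fun n : ℕ => 1 - z * p ^ (n + 1)) := by
    refine (multipliable_theta_aux p (z * p) hp).congr fun n => ?_
    ring
  simpa using tprod_eq_zero_mul' (f := fun k : ℕ => 1 - z * p ^ k) hm

lemma theta_p_mul (p z : ℂ) (hp : ‖p‖ < 1) (hp0 : p ≠ 0) (hz : z ≠ 0) :
    theta p (p * z) = -z⁻¹ * theta p z := by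
  have e1 : (fun k : ℕ => 1 - (p * z) * p ^ k) = fun k : ℕ => 1 - z * p ^ (k + 1) := by
    funext k; ring
  have e2 : (fun k : ℕ => 1 - p ^ (k + 1) * (p * z)⁻¹) = fun k : ℕ => 1 - z⁻¹ * p ^ k := by
    funext k
    have : p ^ (k + 1) * (p * z)⁻¹ = z⁻¹ * p ^ k := by
      field_simp [pow_succ]; ring
    rw [this]
  have e3 : (fun k : ℕ => 1 - p ^ (k + 1) * z⁻¹) = fun k : ℕ => 1 - z⁻¹ * p ^ (k + 1) := by
    funext k; ring
  have key : (1 - z⁻¹) = -z⁻¹ * (1 - z) := by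
    field_simp
    ring
  unfold theta
  rw [e1, e2, e3, tprod_split p z hp, tprod_split p z⁻¹ hp, key]
  ring

/-- `E t = t (t-1) / 2`. -/
def Efun (t : ℤ) : ℤ := t * (t - 1) / 2

lemma Efun_two_mul (t : ℤ) : 2 * Efun t = t * (t - 1) := by
  have h : Even (t * (t - 1)) := by
    rcases Int.even_or_odd t with h | h
    · exact h.mul_right _
    · exact (h.sub_odd odd_one).mul_left _
  unfold Efun
  obtain ⟨r, hr⟩ := h
  set A := t * (t - 1) with hA
  omega

lemma Efun_succ (t : ℤ) : Efun (t + 1) = Efun t + t := by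
  have h1 := Efun_two_mul t
  have h2 := Efun_two_mul (t + 1)
  have h3 : (t + 1) * (t + 1 - 1) = t * (t - 1) + 2 * t := by ring
  linarith

lemma Efun_pred (t : ℤ) : Efun (t - 1) = Efun t - (t - 1) := by
  have h := Efun_succ (t - 1)
  have h2 : t - 1 + 1 = t := by ring
  rw [h2] at h
  linarith

lemma theta_p_zpow (p z : ℂ) (hp : ‖p‖ < 1) (hp0 : p ≠ 0) (hz : z ≠ 0) (t : ℤ) :
    theta p (p ^ t * z) = (-1) ^ t * z ^ (-t) * p ^ (-Efun t) * theta p z := by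
  induction t using Int.induction_on with
  | zero => simp [Efun]
  | succ k ih =>
    have hzk : p ^ (k : ℤ) * z ≠ 0 := mul_ne_zero (zpow_ne_zero _ hp0) hz
    have harg : p ^ ((k : ℤ) + 1) * z = p * (p ^ (k : ℤ) * z) := by
      rw [zpow_add_one₀ hp0]; ring
    rw [harg, theta_p_mul p _ hp hp0 hzk, ih, Efun_succ]
    rw [show ((-1 : ℂ)) ^ ((k : ℤ) + 1) = (-1) ^ (k : ℤ) * (-1) from zpow_add_one₀ (by norm_num) _]
    rw [show -((k : ℤ) + 1) = -(k : ℤ) + (-1) from by ring, zpow_add₀ hz, zpow_neg_one]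
    rw [show -(Efun (k : ℤ) + (k : ℤ)) = -Efun (k : ℤ) + -(k : ℤ) from by ring, zpow_add₀ hp0]
    rw [mul_inv, ← zpow_neg]
    ring
  | pred k ih =>
    have hzk : p ^ (-(k : ℤ) - 1) * z ≠ 0 := mul_ne_zero (zpow_ne_zero _ hp0) hz
    have harg : p * (p ^ (-(k : ℤ) - 1) * z) = p ^ (-(k : ℤ)) * z := by
      rw [show -(k : ℤ) = (-(k : ℤ) - 1) + 1 from by ring, zpow_add_one₀ hp0]; ring
    have step := theta_p_mul p (p ^ (-(k : ℤ) - 1) * z) hp hp0 hzk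
    rw [harg] at step
    have step2 : theta p (p ^ (-(k : ℤ) - 1) * z)
        = -(p ^ (-(k : ℤ) - 1) * z) * theta p (p ^ (-(k : ℤ)) * z) := by
      rw [step]
      field_simp
    rw [step2, ih]
    rw [show Efun (-(k : ℤ) - 1) = Efun (-(k : ℤ)) - (-(k : ℤ) - 1) from Efun_pred _]
    rw [show ((-1 : ℂ)) ^ (-(k : ℤ) - 1) = (-1) ^ (-(k : ℤ)) * (-1) ^ (-1 : ℤ) from by
      rw [show -(k : ℤ) - 1 = -(k : ℤ) + (-1) from sub_eq_add_neg _ _,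
        zpow_add₀ (by norm_num : (-1 : ℂ) ≠ 0)]]
    rw [show -(-(k : ℤ) - 1) = -(-(k : ℤ)) + 1 from by ring, zpow_add₀ hz, zpow_one]
    rw [show -(Efun (-(k : ℤ)) - (-(k : ℤ) - 1)) = -Efun (-(k : ℤ)) + (-(k : ℤ) - 1) from by ring,
      zpow_add₀ hp0]
    simp only [zpow_one, zpow_neg_one]
    ring

lemma zpow_sum' {α : Type*} (x : ℂ) (hx : x ≠ 0) (s : Finset α) (f : α → ℤ) :
    x ^ (∑ a ∈ s, f a) = ∏ a ∈ s, x ^ f a := by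
  classical
  induction s using Finset.induction_on with
  | empty => simp
  | insert _ _ h ih => rw [Finset.sum_insert h, Finset.prod_insert h, zpow_add₀ hx, ih]

/-- The elementary factor collected when shifting the theta argument by `p ^ t`. -/
noncomputable def Cfac (p q X : ℂ) (t : ℤ) (M : ℕ) : ℂ :=
  (-1) ^ (t * (M : ℤ)) * q ^ ((∑ l ∈ Finset.range M, (l : ℤ)) * -t) * X ^ (-t * (M : ℤ))
    * p ^ (-(Efun t) * (M : ℤ))

lemma prod_theta_shift (p q X : ℂ) (hp : ‖p‖ < 1) (hp0 : p ≠ 0) (hq : q ≠ 0)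
    (hX : X ≠ 0) (t : ℤ) (M : ℕ) :
    (∏ l ∈ Finset.range M, theta p (q ^ l * (p ^ t * X)))
      = Cfac p q X t M * ∏ l ∈ Finset.range M, theta p (q ^ l * X) := by
  have h2 : ∀ l ∈ Finset.range M, theta p (q ^ l * (p ^ t * X))
      = ((-1) ^ t * ((q ^ l * X) ^ (-t)) * p ^ (-(Efun t))) * theta p (q ^ l * X) := by
    intro l _
    have hzl : q ^ l * X ≠ 0 := mul_ne_zero (pow_ne_zero _ hq) hX
    have harg : q ^ l * (p ^ t * X) = p ^ t * (q ^ l * X) := by ring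
    rw [harg, theta_p_zpow p _ hp hp0 hzl t]
  rw [Finset.prod_congr rfl h2, Finset.prod_mul_distrib, Finset.prod_mul_distrib,
    Finset.prod_mul_distrib]
  have hA : (∏ _l ∈ Finset.range M, ((-1 : ℂ)) ^ t) = (-1) ^ (t * (M : ℤ)) := by
    rw [Finset.prod_const, Finset.card_range, ← zpow_natCast (((-1 : ℂ)) ^ t) M, ← zpow_mul]
  have hD : (∏ _l ∈ Finset.range M, p ^ (-(Efun t))) = p ^ (-(Efun t) * (M : ℤ)) := by
    rw [Finset.prod_const, Finset.card_range, ← zpow_natCast (p ^ (-(Efun t))) M, ← zpow_mul]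
  have hB : (∏ l ∈ Finset.range M, (q ^ l * X) ^ (-t))
      = q ^ ((∑ l ∈ Finset.range M, (l : ℤ)) * -t) * X ^ (-t * (M : ℤ)) := by
    have e : ∀ l ∈ Finset.range M, (q ^ l * X) ^ (-t) = q ^ ((l : ℤ) * -t) * X ^ (-t) := by
      intro l _
      rw [mul_zpow, ← zpow_natCast q l, ← zpow_mul]
    rw [Finset.prod_congr rfl e, Finset.prod_mul_distrib]
    congr 1
    · rw [← zpow_sum' q hq, ← Finset.sum_mul]
    · rw [Finset.prod_const, Finset.card_range, ← zpow_natCast (X ^ (-t)) M, ← zpow_mul]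
  rw [hA, hB, hD]
  unfold Cfac
  ring

/-- The `q`-certificate
`h_i(x,q;p) = ∏_a ∏_{l=0}^{m_i^{(a)}-1} θ(q^l ∏_k x_k^{m_k^{(a)}}; p)^{ε(a)}`. -/
noncomputable def certificate {K n : ℕ} (ε : Fin K → ℤ) (m : Fin K → Fin n → ℤ)
    (i : Fin n) (p q : ℂ) (x : Fin n → ℂ) : ℂ :=
  ∏ a : Fin K,
    (∏ l ∈ Finset.range (m a i).toNat, theta p (q ^ l * ∏ k : Fin n, x k ^ m a k)) ^ ε a

/-- Rains–Spiridonov: under the diophantine conditions, the certificate is invariant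
under `x_j ↦ p x_j`. -/
theorem certificate_p_elliptic_in_x (K n : ℕ) (ε : Fin K → ℤ) (m : Fin K → Fin n → ℤ)
    (hcube : ∀ i j k : Fin n, ∑ a : Fin K, ε a * m a i * m a j * m a k = 0)
    (hquad : ∀ i j : Fin n, ∑ a : Fin K, ε a * m a i * m a j = 0)
    (i j : Fin n) (p q : ℂ) (hp : ‖p‖ < 1) (hp0 : p ≠ 0) (hq : q ≠ 0)
    (x : Fin n → ℂ) (hx : ∀ k, x k ≠ 0)
    (hmi : ∀ a : Fin K, 0 ≤ m a i)
    (hθ : ∀ (a : Fin K) (l : ℕ),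
      theta p (q ^ l * ∏ k : Fin n, x k ^ m a k) ≠ 0)
    (hθ' : ∀ (a : Fin K) (l : ℕ),
      theta p (q ^ l * ∏ k : Fin n, Function.update x j (p * x j) k ^ m a k) ≠ 0) :
    certificate ε m i p q (Function.update x j (p * x j)) = certificate ε m i p q x := by
  classical
  have hX0 : ∀ a : Fin K, (∏ k : Fin n, x k ^ m a k) ≠ 0 :=
    fun a => Finset.prod_ne_zero_iff.mpr fun k _ => zpow_ne_zero _ (hx k)
  have hMi : ∀ a : Fin K, (((m a i).toNat : ℕ) : ℤ) = m a i :=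
    fun a => Int.toNat_of_nonneg (hmi a)
  -- Step 1: the updated monomial
  have step1 : ∀ a : Fin K,
      (∏ k : Fin n, Function.update x j (p * x j) k ^ m a k)
        = p ^ (m a j) * ∏ k : Fin n, x k ^ m a k := by
    intro a
    have h1 : ∀ k : Fin n, Function.update x j (p * x j) k ^ m a k
        = Function.update (fun k : Fin n => x k ^ m a k) j ((p * x j) ^ m a j) k := by
      intro k
      rcases eq_or_ne k j with rfl | hk
      · simp
      · simp [Function.update_of_ne hk]
    rw [Finset.prod_congr rfl fun k _ => h1 k,
      Finset.prod_update_of_mem (Finset.mem_univ j),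
      Finset.prod_eq_mul_prod_sdiff_singleton_of_mem (Finset.mem_univ j) (fun k : Fin n => x k ^ m a k),
      mul_zpow]
    ring
  -- Step 2: per-`a` shift of the inner product of thetas
  have step2 : ∀ a : Fin K,
      (∏ l ∈ Finset.range (m a i).toNat,
          theta p (q ^ l * ∏ k : Fin n, Function.update x j (p * x j) k ^ m a k))
        = Cfac p q (∏ k : Fin n, x k ^ m a k) (m a j) (m a i).toNat
            * ∏ l ∈ Finset.range (m a i).toNat,
                theta p (q ^ l * ∏ k : Fin n, x k ^ m a k) := by
    intro a
    rw [Finset.prod_congr rfl fun l _ => by rw [step1 a]]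
    exact prod_theta_shift p q _ hp hp0 hq (hX0 a) (m a j) (m a i).toNat
  -- Gauss sum identity
  have twoS : ∀ a : Fin K,
      2 * (∑ l ∈ Finset.range (m a i).toNat, (l : ℤ)) = m a i * (m a i - 1) := by
    intro a
    have h := hMi a
    generalize hM : (m a i).toNat = M at h ⊢
    rw [← h]
    rcases M with _ | mm
    · simp
    · have hg := Finset.sum_range_id_mul_two (mm + 1)
      have hz : ((∑ l ∈ Finset.range (mm + 1), l : ℕ) : ℤ) * 2 = (((mm + 1) * mm : ℕ) : ℤ) := by
        exact_mod_cast (by simpa using hg)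
      push_cast at hz ⊢
      linarith
  -- the four integer identities
  have hsum1 : (∑ a : Fin K, m a j * (((m a i).toNat : ℕ) : ℤ) * ε a) = 0 := by
    rw [Finset.sum_congr rfl fun a _ => by rw [hMi a]]
    rw [Finset.sum_congr rfl
      (fun a _ => by ring : ∀ a ∈ Finset.univ, m a j * m a i * ε a = ε a * m a j * m a i)]
    exact hquad j i
  have hsum2 : (∑ a : Fin K,
      (∑ l ∈ Finset.range (m a i).toNat, (l : ℤ)) * -(m a j) * ε a) = 0 := by
    have h2 : ∀ a ∈ (Finset.univ : Finset (Fin K)),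
        2 * ((∑ l ∈ Finset.range (m a i).toNat, (l : ℤ)) * -(m a j) * ε a)
          = -(ε a * m a i * m a i * m a j) + ε a * m a i * m a j := by
      intro a _
      linear_combination (-(m a j) * ε a) * twoS a
    have h3 : 2 * (∑ a : Fin K,
        (∑ l ∈ Finset.range (m a i).toNat, (l : ℤ)) * -(m a j) * ε a) = 0 := by
      rw [Finset.mul_sum, Finset.sum_congr rfl h2, Finset.sum_add_distrib,
        Finset.sum_neg_distrib, hcube i i j, hquad i j]
      ring
    linarith
  have hsum3 : ∀ k : Fin n,
      (∑ a : Fin K, m a k * (-(m a j) * (((m a i).toNat : ℕ) : ℤ) * ε a)) = 0 := by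
    intro k
    rw [Finset.sum_congr rfl fun a _ => by rw [hMi a]]
    rw [Finset.sum_congr rfl
      (fun a _ => by ring : ∀ a ∈ Finset.univ,
        m a k * (-(m a j) * m a i * ε a) = -(ε a * m a i * m a j * m a k))]
    rw [Finset.sum_neg_distrib, hcube i j k]
    ring
  have hsum4 : (∑ a : Fin K, -(Efun (m a j)) * (((m a i).toNat : ℕ) : ℤ) * ε a) = 0 := by
    have h2 : ∀ a ∈ (Finset.univ : Finset (Fin K)),
        2 * (-(Efun (m a j)) * (((m a i).toNat : ℕ) : ℤ) * ε a)
          = -(ε a * m a j * m a j * m a i) + ε a * m a j * m a i := by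
      intro a _
      have := hMi a
      linear_combination (-(m a i) * ε a) * Efun_two_mul (m a j)
        + (-(2 * Efun (m a j) * ε a)) * this
    have h3 : 2 * (∑ a : Fin K, -(Efun (m a j)) * (((m a i).toNat : ℕ) : ℤ) * ε a) = 0 := by
      rw [Finset.mul_sum, Finset.sum_congr rfl h2, Finset.sum_add_distrib,
        Finset.sum_neg_distrib, hcube j j i, hquad j i]
      ring
    linarith
  -- the product of all collected factors is 1
  have main : (∏ a : Fin K,
      (Cfac p q (∏ k : Fin n, x k ^ m a k) (m a j) (m a i).toNat) ^ (ε a)) = 1 := by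
    have expand : ∀ a ∈ (Finset.univ : Finset (Fin K)),
        (Cfac p q (∏ k : Fin n, x k ^ m a k) (m a j) (m a i).toNat) ^ (ε a)
          = (-1 : ℂ) ^ (m a j * (((m a i).toNat : ℕ) : ℤ) * ε a)
            * q ^ ((∑ l ∈ Finset.range (m a i).toNat, (l : ℤ)) * -(m a j) * ε a)
            * (∏ k : Fin n, x k ^ m a k) ^ (-(m a j) * (((m a i).toNat : ℕ) : ℤ) * ε a)
            * p ^ (-(Efun (m a j)) * (((m a i).toNat : ℕ) : ℤ) * ε a) := by
      intro a _
      unfold Cfac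
      rw [mul_zpow, mul_zpow, mul_zpow, ← zpow_mul, ← zpow_mul, ← zpow_mul, ← zpow_mul]
    rw [Finset.prod_congr rfl expand, Finset.prod_mul_distrib, Finset.prod_mul_distrib,
      Finset.prod_mul_distrib]
    have f1 : (∏ a : Fin K, (-1 : ℂ) ^ (m a j * (((m a i).toNat : ℕ) : ℤ) * ε a)) = 1 := by
      rw [← zpow_sum' (-1 : ℂ) (by norm_num), hsum1, zpow_zero]
    have f2 : (∏ a : Fin K,
        q ^ ((∑ l ∈ Finset.range (m a i).toNat, (l : ℤ)) * -(m a j) * ε a)) = 1 := by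
      rw [← zpow_sum' q hq, hsum2, zpow_zero]
    have f4 : (∏ a : Fin K, p ^ (-(Efun (m a j)) * (((m a i).toNat : ℕ) : ℤ) * ε a)) = 1 := by
      rw [← zpow_sum' p hp0, hsum4, zpow_zero]
    have f3 : (∏ a : Fin K,
        (∏ k : Fin n, x k ^ m a k) ^ (-(m a j) * (((m a i).toNat : ℕ) : ℤ) * ε a)) = 1 := by
      have e : ∀ a ∈ (Finset.univ : Finset (Fin K)),
          (∏ k : Fin n, x k ^ m a k) ^ (-(m a j) * (((m a i).toNat : ℕ) : ℤ) * ε a)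
            = ∏ k : Fin n, x k ^ (m a k * (-(m a j) * (((m a i).toNat : ℕ) : ℤ) * ε a)) := by
        intro a _
        rw [← Finset.prod_zpow]
        exact Finset.prod_congr rfl fun k _ => (zpow_mul (x k) _ _).symm
      rw [Finset.prod_congr rfl e, Finset.prod_comm]
      have e2 : ∀ k ∈ (Finset.univ : Finset (Fin n)),
          (∏ a : Fin K, x k ^ (m a k * (-(m a j) * (((m a i).toNat : ℕ) : ℤ) * ε a))) = 1 := by
        intro k _
        rw [← zpow_sum' (x k) (hx k), hsum3 k, zpow_zero]
      rw [Finset.prod_congr rfl e2]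
      exact Finset.prod_const_one
    rw [f1, f2, f3, f4]
    ring
  -- assemble
  unfold certificate
  rw [Finset.prod_congr rfl fun a _ => by rw [step2 a, mul_zpow]]
  rw [Finset.prod_mul_distrib, main, one_mul]
end

section
/- Let ε : Fin K → ℤ, m : Fin K → Fin n → ℤ, R : Fin K → ℝ, γ : Fin n → ℝ, r ∈ ℤ. Suppose R(a) = -2 ∑_i γ_i m_i^{(a)} for all a, and suppose equations ∑_a ε(a) m_i^{(a)} m_j^{(a)} m_k^{(a)} = 0, ∑_a ε(a) m_i^{(a)} m_j^{(a)}(R(a)-1) = 0, ∑_a ε(a) m_i^{(a)}(R(a)-1)² = 0, ∑_a ε(a) m_i^{(a)} = 0 hold for all indices. Then: (i) ∑_a ε(a) m_i^{(a)} m_j^{(a)} = 0 for all i,j; (ii) the two equations ∑_a ε(a)(R(a)-1)³ + r = 0 and ∑_a ε(a)(R(a)-1) + r = 0 are equivalent to the single condition ∑_a ε(a) = r (i.e., each is equivalent to ∑_a ε(a) = r given the other hypotheses). -/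
open Finset

/-- When the `R`-charges are removable, `R(a) = -2 ∑_i γ_i m_i^{(a)}`, the modular
invariance equations reduce to the Rains–Spiridonov equations, and the two `U(1)_R`
equations each become equivalent to the single condition `∑_a ε(a) = r`. -/
theorem removable_R_charge_reduction (K n : ℕ) (ε : Fin K → ℤ)
    (m : Fin K → Fin n → ℤ) (R : Fin K → ℝ) (γ : Fin n → ℝ) (r : ℤ)
    (hR : ∀ a : Fin K, R a = -2 * ∑ i : Fin n, γ i * (m a i : ℝ))
    (hcube : ∀ i j k : Fin n, ∑ a : Fin K, ε a * m a i * m a j * m a k = 0)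
    (hquadR : ∀ i j : Fin n, ∑ a : Fin K, (ε a : ℝ) * (m a i : ℝ) * (m a j : ℝ) * (R a - 1) = 0)
    (hlinR2 : ∀ i : Fin n, ∑ a : Fin K, (ε a : ℝ) * (m a i : ℝ) * (R a - 1) ^ 2 = 0)
    (hlin : ∀ i : Fin n, ∑ a : Fin K, ε a * m a i = 0) :
    (∀ i j : Fin n, ∑ a : Fin K, ε a * m a i * m a j = 0) ∧
    ((∑ a : Fin K, (ε a : ℝ) * (R a - 1) ^ 3 + (r : ℝ) = 0) ↔ (∑ a : Fin K, ε a = r)) ∧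
    ((∑ a : Fin K, (ε a : ℝ) * (R a - 1) + (r : ℝ) = 0) ↔ (∑ a : Fin K, ε a = r)) := by
  -- real casts of the integer hypotheses
  have hcubeR : ∀ i j k : Fin n,
      ∑ a : Fin K, (ε a : ℝ) * (m a i : ℝ) * (m a j : ℝ) * (m a k : ℝ) = 0 := by
    intro i j k
    have h : ((∑ a : Fin K, ε a * m a i * m a j * m a k : ℤ) : ℝ) = 0 := by
      rw [hcube i j k]; norm_num
    push_cast at h
    exact h
  have hlinr : ∀ i : Fin n, ∑ a : Fin K, (ε a : ℝ) * (m a i : ℝ) = 0 := by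
    intro i
    have h : ((∑ a : Fin K, ε a * m a i : ℤ) : ℝ) = 0 := by rw [hlin i]; norm_num
    push_cast at h
    exact h
  -- key expansion lemma
  have key : ∀ f : Fin K → ℝ, ∑ a : Fin K, f a * (R a - 1)
      = ∑ i : Fin n, (-2) * (γ i * (∑ a : Fin K, f a * (m a i : ℝ))) - ∑ a : Fin K, f a := by
    intro f
    have step : ∀ a : Fin K, f a * (R a - 1)
        = (∑ i : Fin n, (-2) * (γ i * (f a * (m a i : ℝ)))) - f a := by
      intro a
      rw [hR a]
      have h1 : f a * (-2 * ∑ i : Fin n, γ i * (m a i : ℝ) - 1)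
          = -2 * (f a * ∑ i : Fin n, γ i * (m a i : ℝ)) - f a := by ring
      rw [h1, Finset.mul_sum, Finset.mul_sum]
      congr 1
      exact Finset.sum_congr rfl fun i _ => by ring
    calc ∑ a : Fin K, f a * (R a - 1)
        = ∑ a : Fin K, ((∑ i : Fin n, (-2) * (γ i * (f a * (m a i : ℝ)))) - f a) :=
          Finset.sum_congr rfl fun a _ => step a
      _ = (∑ a : Fin K, ∑ i : Fin n, (-2) * (γ i * (f a * (m a i : ℝ)))) - ∑ a : Fin K, f a :=
          Finset.sum_sub_distrib _ _
      _ = (∑ i : Fin n, ∑ a : Fin K, (-2) * (γ i * (f a * (m a i : ℝ)))) - ∑ a : Fin K, f a := by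
          rw [Finset.sum_comm]
      _ = ∑ i : Fin n, (-2) * (γ i * (∑ a : Fin K, f a * (m a i : ℝ))) - ∑ a : Fin K, f a := by
          congr 1
          refine Finset.sum_congr rfl fun i _ => ?_
          rw [Finset.mul_sum, Finset.mul_sum]
  -- quadratic sums vanish (real)
  have SqR : ∀ i j : Fin n, ∑ a : Fin K, (ε a : ℝ) * (m a i : ℝ) * (m a j : ℝ) = 0 := by
    intro i j
    have h0 := key (fun a => (ε a : ℝ) * (m a i : ℝ) * (m a j : ℝ))
    try simp only [] at h0
    rw [hquadR i j] at h0
    have hz : ∀ k ∈ Finset.univ, (-2 : ℝ) * (γ k * (∑ a : Fin K,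
        (ε a : ℝ) * (m a i : ℝ) * (m a j : ℝ) * (m a k : ℝ))) = 0 := by
      intro k _
      rw [hcubeR i j k]; ring
    rw [Finset.sum_congr rfl hz, Finset.sum_const_zero] at h0
    linarith
  -- linear sums times (R-1) vanish
  have S1 : ∀ i : Fin n, ∑ a : Fin K, (ε a : ℝ) * (m a i : ℝ) * (R a - 1) = 0 := by
    intro i
    have h0 := key (fun a => (ε a : ℝ) * (m a i : ℝ))
    try simp only [] at h0
    have hz : ∀ k ∈ Finset.univ, (-2 : ℝ) * (γ k * (∑ a : Fin K,
        (ε a : ℝ) * (m a i : ℝ) * (m a k : ℝ))) = 0 := by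
      intro k _
      rw [SqR i k]; ring
    rw [Finset.sum_congr rfl hz, Finset.sum_const_zero, hlinr i] at h0
    linarith [h0]
  -- ∑ ε (R-1) = - ∑ ε
  have E1 : ∑ a : Fin K, (ε a : ℝ) * (R a - 1) = - ∑ a : Fin K, (ε a : ℝ) := by
    have h0 := key (fun a => (ε a : ℝ))
    try simp only [] at h0
    have hz : ∀ k ∈ Finset.univ, (-2 : ℝ) * (γ k * (∑ a : Fin K,
        (ε a : ℝ) * (m a k : ℝ))) = 0 := by
      intro k _
      rw [hlinr k]; ring
    rw [Finset.sum_congr rfl hz, Finset.sum_const_zero] at h0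
    linarith
  -- ∑ ε (R-1)^2 = ∑ ε
  have E2 : ∑ a : Fin K, (ε a : ℝ) * (R a - 1) ^ 2 = ∑ a : Fin K, (ε a : ℝ) := by
    have h0 := key (fun a => (ε a : ℝ) * (R a - 1))
    try simp only [] at h0
    have hL : ∑ a : Fin K, (ε a : ℝ) * (R a - 1) * (R a - 1)
        = ∑ a : Fin K, (ε a : ℝ) * (R a - 1) ^ 2 :=
      Finset.sum_congr rfl fun a _ => by ring
    have hz : ∀ k ∈ Finset.univ, (-2 : ℝ) * (γ k * (∑ a : Fin K,
        (ε a : ℝ) * (R a - 1) * (m a k : ℝ))) = 0 := by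
      intro k _
      have : ∑ a : Fin K, (ε a : ℝ) * (R a - 1) * (m a k : ℝ)
          = ∑ a : Fin K, (ε a : ℝ) * (m a k : ℝ) * (R a - 1) :=
        Finset.sum_congr rfl fun a _ => by ring
      rw [this, S1 k]; ring
    rw [hL, Finset.sum_congr rfl hz, Finset.sum_const_zero, E1] at h0
    linarith
  -- ∑ ε (R-1)^3 = - ∑ ε
  have E3 : ∑ a : Fin K, (ε a : ℝ) * (R a - 1) ^ 3 = - ∑ a : Fin K, (ε a : ℝ) := by
    have h0 := key (fun a => (ε a : ℝ) * (R a - 1) ^ 2)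
    try simp only [] at h0
    have hL : ∑ a : Fin K, (ε a : ℝ) * (R a - 1) ^ 2 * (R a - 1)
        = ∑ a : Fin K, (ε a : ℝ) * (R a - 1) ^ 3 :=
      Finset.sum_congr rfl fun a _ => by ring
    have hz : ∀ k ∈ Finset.univ, (-2 : ℝ) * (γ k * (∑ a : Fin K,
        (ε a : ℝ) * (R a - 1) ^ 2 * (m a k : ℝ))) = 0 := by
      intro k _
      have : ∑ a : Fin K, (ε a : ℝ) * (R a - 1) ^ 2 * (m a k : ℝ)
          = ∑ a : Fin K, (ε a : ℝ) * (m a k : ℝ) * (R a - 1) ^ 2 :=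
        Finset.sum_congr rfl fun a _ => by ring
      rw [this, hlinR2 k]; ring
    rw [hL, Finset.sum_congr rfl hz, Finset.sum_const_zero, E2] at h0
    linarith
  have hcast : (((∑ a : Fin K, ε a : ℤ)) : ℝ) = ∑ a : Fin K, (ε a : ℝ) := by push_cast; rfl
  refine ⟨?_, ?_, ?_⟩
  · intro i j
    have h := SqR i j
    have : ((∑ a : Fin K, ε a * m a i * m a j : ℤ) : ℝ) = 0 := by push_cast; exact h
    exact_mod_cast this
  · rw [E3]
    constructor
    · intro h
      have : (((∑ a : Fin K, ε a : ℤ)) : ℝ) = ((r : ℤ) : ℝ) := by rw [hcast]; linarith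
      exact_mod_cast this
    · intro h
      rw [← hcast, h]
      ring
  · rw [E1]
    constructor
    · intro h
      have : (((∑ a : Fin K, ε a : ℤ)) : ℝ) = ((r : ℤ) : ℝ) := by rw [hcast]; linarith
      exact_mod_cast this
    · intro h
      rw [← hcast, h]
      ring
end
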